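/- arXiv:2602.24194 — 2 statements merged into one kernel-verified Lean document; each statement's English description precedes it below -/
import Mathlib

section
/- Let α ∈ (0,1) and consider the Prelec weighting function T(p) = exp(−(−ln p)^α) with conjugate T̃(p) = 1 − exp(−(−ln(1−p))^α). Then the equation x^α = ln(α x^{α−1} e^x (1 − e^{−x}) + 1) has a unique solution x > 0, and the point p*(α) := sup{p ∈ [0,1) : T̃′(p) ≤ T̃(p)/p} satisfies p*(α) = 1 − e^{−x}. -/
open Set

noncomputable section

/-- The conjugate `T̃(p) = 1 − exp(−(−ln(1−p))^α)` of the Prelec probability weighting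
function `T(p) = exp(−(−ln p)^α)`. -/
def prelecConj (α : ℝ) : ℝ → ℝ :=
  fun p => 1 - Real.exp (-((-Real.log (1 - p)) ^ α))

section Work

/-- slope monotonicity of exp: for `0 < a ≤ b`, `b (e^a - 1) ≤ a (e^b - 1)`. -/
lemma slope_exp_mono {a b : ℝ} (ha : 0 < a) (hab : a ≤ b) :
    b * (Real.exp a - 1) ≤ a * (Real.exp b - 1) := by
  have hb : 0 < b := lt_of_lt_of_le ha hab
  have ht1 : a / b ≤ 1 := div_le_one_of_le₀ hab hb.le
  have ht0 : 0 ≤ a / b := by positivity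
  have h := convexOn_exp.2 (mem_univ (0:ℝ)) (mem_univ b)
    (show (0:ℝ) ≤ 1 - a/b by linarith) (show (0:ℝ) ≤ a/b from ht0) (by ring)
  simp only [smul_eq_mul, mul_zero, zero_add, Real.exp_zero, mul_one] at h
  have hab' : (a / b) * b = a := div_mul_cancel₀ a hb.ne'
  rw [hab'] at h
  -- h : exp a ≤ (1 - a/b) + (a/b) * exp b
  have := mul_le_mul_of_nonneg_left h hb.le
  have h2 : b * ((1 - a/b) + (a/b) * Real.exp b) = b - a + a * Real.exp b := by
    first | (field_simp; ring) | field_simp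
  nlinarith [this, h2]

/-- strict version used for φ: for `0 < a < b`, `a (1 - e^{-b}) < b (1 - e^{-a})`. -/
lemma slope_exp_strict {a b : ℝ} (ha : 0 < a) (hab : a < b) :
    a * (1 - Real.exp (-b)) < b * (1 - Real.exp (-a)) := by
  have hb : 0 < b := ha.trans hab
  have ht1 : a / b < 1 := (div_lt_one hb).mpr hab
  have ht0 : 0 < a / b := by positivity
  have h := strictConvexOn_exp.2 (mem_univ (-b)) (mem_univ (0:ℝ))
    (neg_ne_zero.mpr hb.ne') (show (0:ℝ) < a/b from ht0)
    (show (0:ℝ) < 1 - a/b by linarith) (by ring)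
  simp only [smul_eq_mul, mul_zero, add_zero, Real.exp_zero, mul_one] at h
  have hab' : (a / b) * (-b) = -a := by field_simp
  rw [hab'] at h
  -- h : exp (-a) < (a/b) * exp (-b) + (1 - a/b)
  have := mul_lt_mul_of_pos_left h hb
  have h2 : b * ((a/b) * Real.exp (-b) + (1 - a/b)) = a * Real.exp (-b) + b - a := by
    first | (field_simp; ring) | field_simp
  nlinarith [this, h2]

/-- `φ(t) = t / (1 - e^{-t})`. -/
def phi (t : ℝ) : ℝ := t / (1 - Real.exp (-t))

lemma one_sub_exp_neg_pos {t : ℝ} (ht : 0 < t) : 0 < 1 - Real.exp (-t) := by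
  have : Real.exp (-t) < 1 := Real.exp_lt_one_iff.mpr (by linarith)
  linarith

lemma phi_pos {t : ℝ} (ht : 0 < t) : 0 < phi t :=
  div_pos ht (one_sub_exp_neg_pos ht)

lemma one_lt_phi {t : ℝ} (ht : 0 < t) : 1 < phi t := by
  rw [phi, lt_div_iff₀ (one_sub_exp_neg_pos ht), one_mul]
  have := Real.add_one_lt_exp (x := -t) (by linarith)
  linarith

lemma phi_strictMono {a b : ℝ} (ha : 0 < a) (hab : a < b) : phi a < phi b := by
  rw [phi, phi, div_lt_div_iff₀ (one_sub_exp_neg_pos ha) (one_sub_exp_neg_pos (ha.trans hab))]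
  exact slope_exp_strict ha hab

/-- Key inequality for the derivative sign: for `x > 1`, `α φ(x^α) + (1-α) < φ(x)`. -/
lemma key_phi {α x : ℝ} (hα : α ∈ Ioo (0:ℝ) 1) (hx : 1 < x) :
    α * phi (x ^ α) + (1 - α) < phi x := by
  have hxa : x ^ α < x := by
    have := Real.rpow_lt_rpow_of_exponent_lt hx hα.2
    rwa [Real.rpow_one] at this
  have hxa0 : 0 < x ^ α := Real.rpow_pos_of_pos (by linarith) α
  have h1 := phi_strictMono hxa0 hxa
  have h2 := one_lt_phi (show (0:ℝ) < x by linarith)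
  nlinarith [hα.1, hα.2]


/-- `L α x = log(e^{x^α} - 1) - log(α x^{α-1}(e^x - 1))`, expanded. -/
def Lfun (α : ℝ) (x : ℝ) : ℝ :=
  Real.log (Real.exp (x ^ α) - 1) -
    (Real.log α + (α - 1) * Real.log x + Real.log (Real.exp x - 1))

variable {α x : ℝ}

lemma exp_sub_one_pos (h : 0 < x) : 0 < Real.exp x - 1 := by
  have := Real.add_one_lt_exp h.ne'
  linarith

lemma A_pos (hα : 0 < α) (hx : 0 < x) : 0 < Real.exp (x ^ α) - 1 :=
  exp_sub_one_pos (Real.rpow_pos_of_pos hx α)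

lemma Q_pos (hα : 0 < α) (hx : 0 < x) : 0 < α * x ^ (α - 1) * (Real.exp x - 1) := by
  have h1 : 0 < x ^ (α - 1) := Real.rpow_pos_of_pos hx _
  have h2 := exp_sub_one_pos hx
  positivity

lemma L_eq (hα : 0 < α) (hx : 0 < x) :
    Lfun α x = Real.log (Real.exp (x ^ α) - 1) -
      Real.log (α * x ^ (α - 1) * (Real.exp x - 1)) := by
  have h1 : (0:ℝ) < x ^ (α - 1) := Real.rpow_pos_of_pos hx _
  have h2 := exp_sub_one_pos hx
  rw [Lfun, Real.log_mul (by positivity) h2.ne', Real.log_mul hα.ne' h1.ne',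
    Real.log_rpow hx]

lemma L_nonneg_iff (hα : 0 < α) (hx : 0 < x) :
    0 ≤ Lfun α x ↔ α * x ^ (α - 1) * (Real.exp x - 1) ≤ Real.exp (x ^ α) - 1 := by
  rw [L_eq hα hx, sub_nonneg, Real.log_le_log_iff (Q_pos hα hx) (A_pos hα hx)]

lemma L_pos_iff (hα : 0 < α) (hx : 0 < x) :
    0 < Lfun α x ↔ α * x ^ (α - 1) * (Real.exp x - 1) < Real.exp (x ^ α) - 1 := by
  rw [L_eq hα hx, sub_pos, Real.log_lt_log_iff (Q_pos hα hx) (A_pos hα hx)]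

lemma hasDerivAt_L (hα : 0 < α) (hx : 0 < x) :
    HasDerivAt (Lfun α)
      (Real.exp (x ^ α) * (α * x ^ (α - 1)) / (Real.exp (x ^ α) - 1) -
        ((α - 1) * x⁻¹ + Real.exp x / (Real.exp x - 1))) x := by
  have h1 : HasDerivAt (fun y : ℝ => y ^ α) (α * x ^ (α - 1)) x :=
    Real.hasDerivAt_rpow_const (Or.inl hx.ne')
  have h2 : HasDerivAt (fun y : ℝ => Real.exp (y ^ α) - 1)
      (Real.exp (x ^ α) * (α * x ^ (α - 1))) x := h1.exp.sub_const 1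
  have h3 := h2.log (A_pos hα hx).ne'
  have h4 : HasDerivAt (fun y : ℝ => Real.exp y - 1) (Real.exp x) x :=
    (Real.hasDerivAt_exp x).sub_const 1
  have h5 := h4.log (exp_sub_one_pos hx).ne'
  have h6 : HasDerivAt (fun y : ℝ => (α - 1) * Real.log y) ((α - 1) * x⁻¹) x :=
    (Real.hasDerivAt_log hx.ne').const_mul (α - 1)
  have h7 : HasDerivAt (fun y : ℝ => Real.log α + (α - 1) * Real.log y +
      Real.log (Real.exp y - 1)) ((α - 1) * x⁻¹ + Real.exp x / (Real.exp x - 1)) x :=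
    (h6.const_add (Real.log α)).add h5
  exact h3.sub h7

lemma deriv_L_neg (hα : α ∈ Ioo (0:ℝ) 1) (hx : 1 < x) :
    deriv (Lfun α) x < 0 := by
  have hx0 : (0:ℝ) < x := lt_trans zero_lt_one hx
  rw [(hasDerivAt_L hα.1 hx0).deriv]
  set A := Real.exp (x ^ α) with hA
  set B := Real.exp x with hB
  have hA1 : 1 < A := by have := A_pos hα.1 hx0; linarith
  have hB1 : 1 < B := by have := exp_sub_one_pos hx0; linarith
  have hxa0 : 0 < x ^ α := Real.rpow_pos_of_pos hx0 α
  have hxx : x ^ (α - 1) * x = x ^ α := by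
    rw [← Real.rpow_add_one hx0.ne' (α - 1)]; ring_nf
  have hAinv : 1 - A⁻¹ = (A - 1) / A := by
    field_simp
  have hBinv : 1 - B⁻¹ = (B - 1) / B := by
    field_simp
  have hphiA : phi (x ^ α) = x ^ (α - 1) * x * A / (A - 1) := by
    rw [phi, Real.exp_neg, ← hA, hAinv, div_div_eq_mul_div, hxx]
  have hphiB : phi x = x * B / (B - 1) := by
    rw [phi, Real.exp_neg, ← hB, hBinv, div_div_eq_mul_div]
  have key := key_phi hα hx
  rw [hphiA, hphiB] at key
  have hAne : A - 1 ≠ 0 := by linarith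
  have hBne : B - 1 ≠ 0 := by linarith
  have e : (A * (α * x ^ (α - 1)) / (A - 1) - ((α - 1) * x⁻¹ + B / (B - 1))) * x
      = α * (x ^ (α - 1) * x * A / (A - 1)) - (α - 1) - x * B / (B - 1) := by
    field_simp
    ring
  have hgoal : (A * (α * x ^ (α - 1)) / (A - 1) - ((α - 1) * x⁻¹ + B / (B - 1))) * x < 0 := by
    rw [e]; linarith
  by_contra h
  push_neg at h
  exact absurd hgoal (not_lt.mpr (mul_nonneg h hx0.le))

end Work
section C
variable {α x : ℝ}

lemma L_strictAnti (hα : α ∈ Ioo (0:ℝ) 1) : StrictAntiOn (Lfun α) (Ici 1) := by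
  apply strictAntiOn_of_deriv_neg (convex_Ici 1)
  · intro y hy
    exact ((hasDerivAt_L hα.1 (lt_of_lt_of_le zero_lt_one hy)).continuousAt).continuousWithinAt
  · intro y hy
    rw [interior_Ici] at hy
    exact deriv_L_neg hα hy

lemma L_pos_of_le_one (hα : α ∈ Ioo (0:ℝ) 1) (hx0 : 0 < x) (hx1 : x ≤ 1) :
    0 < Lfun α x := by
  rw [L_pos_iff hα.1 hx0]
  have hxa : x ≤ x ^ α := by
    have := Real.rpow_le_rpow_of_exponent_ge hx0 hx1 hα.2.le
    rwa [Real.rpow_one] at this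
  have hslope := slope_exp_mono hx0 hxa
  -- x^α * (exp x - 1) ≤ x * (exp (x^α) - 1)
  have hpow : x ^ (α - 1) * x = x ^ α := by
    rw [← Real.rpow_add_one hx0.ne' (α - 1)]; ring_nf
  have h1 : x ^ (α - 1) * (Real.exp x - 1) * x ≤ (Real.exp (x ^ α) - 1) * x := by
    calc x ^ (α - 1) * (Real.exp x - 1) * x = x ^ α * (Real.exp x - 1) := by
          rw [← hpow]; ring
      _ ≤ x * (Real.exp (x ^ α) - 1) := hslope
      _ = (Real.exp (x ^ α) - 1) * x := by ring
  have h2 : x ^ (α - 1) * (Real.exp x - 1) ≤ Real.exp (x ^ α) - 1 :=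
    le_of_mul_le_mul_right h1 hx0
  have h3 : 0 < x ^ (α - 1) * (Real.exp x - 1) := by
    have := Real.rpow_pos_of_pos hx0 (α - 1)
    have := exp_sub_one_pos hx0
    positivity
  nlinarith [hα.1, hα.2]

lemma L_one (hα : α ∈ Ioo (0:ℝ) 1) : Lfun α 1 = -Real.log α := by
  rw [Lfun, Real.one_rpow, Real.log_one]
  ring

lemma L_one_pos (hα : α ∈ Ioo (0:ℝ) 1) : 0 < Lfun α 1 := by
  rw [L_one hα]
  have := Real.log_neg hα.1 hα.2
  linarith

lemma log_le_quarter {y : ℝ} (hy : 64 ≤ y) : Real.log y ≤ y / 4 := by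
  have hy0 : (0:ℝ) < y := by linarith
  have hs : (8:ℝ) ≤ Real.sqrt y := by
    rw [show (8:ℝ) = Real.sqrt 64 by
      rw [show (64:ℝ) = 8^2 by norm_num, Real.sqrt_sq (by norm_num)]]
    exact Real.sqrt_le_sqrt hy
  have hs0 : 0 < Real.sqrt y := by linarith
  have h1 : Real.log y = 2 * Real.log (Real.sqrt y) := by
    conv_lhs => rw [← Real.sq_sqrt hy0.le]
    rw [Real.log_pow]
    norm_num
  have h2 : Real.log (Real.sqrt y) ≤ Real.sqrt y - 1 := Real.log_le_sub_one_of_pos hs0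
  have h3 : Real.sqrt y ^ 2 = y := Real.sq_sqrt hy0.le
  nlinarith [h1, h2, h3, hs]

lemma exists_L_neg (hα : α ∈ Ioo (0:ℝ) 1) :
    ∃ x₁ : ℝ, 1 < x₁ ∧ Lfun α x₁ < 0 := by
  obtain ⟨hα0, hα1⟩ := hα
  set x₁ : ℝ := max 64 (max ((4:ℝ) ^ ((1:ℝ)/(1-α))) (2 * (1 - Real.log α))) with hx₁def
  have h64 : (64:ℝ) ≤ x₁ := le_max_left _ _
  have hx1 : (1:ℝ) < x₁ := by linarith
  have hx0 : (0:ℝ) < x₁ := by linarith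
  refine ⟨x₁, hx1, ?_⟩
  have hxa0 : 0 < x₁ ^ α := Real.rpow_pos_of_pos hx0 α
  -- log(exp(x^α) - 1) < x^α
  have hA := A_pos hα0 hx0 (x := x₁)
  have b1 : Real.log (Real.exp (x₁ ^ α) - 1) < x₁ ^ α := by
    have : Real.exp (x₁ ^ α) - 1 < Real.exp (x₁ ^ α) := by linarith
    calc Real.log (Real.exp (x₁ ^ α) - 1) < Real.log (Real.exp (x₁ ^ α)) :=
          (Real.log_lt_log_iff hA (Real.exp_pos _)).mpr this
      _ = x₁ ^ α := Real.log_exp _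
  -- log(exp x - 1) ≥ x - 1
  have b2 : x₁ - 1 ≤ Real.log (Real.exp x₁ - 1) := by
    have he : Real.exp (x₁ - 1) ≤ Real.exp x₁ - 1 := by
      have h1 : Real.exp x₁ = Real.exp (x₁ - 1) * Real.exp 1 := by
        rw [← Real.exp_add]; ring_nf
      have h2 : (1:ℝ) ≤ Real.exp (x₁ - 1) := Real.one_le_exp (by linarith)
      nlinarith [Real.exp_one_gt_d9]
    calc x₁ - 1 = Real.log (Real.exp (x₁ - 1)) := (Real.log_exp _).symm
      _ ≤ Real.log (Real.exp x₁ - 1) := Real.log_le_log (Real.exp_pos _) he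
  -- x^α ≤ x/4
  have b3 : x₁ ^ α ≤ x₁ / 4 := by
    have h4 : (4:ℝ) ^ ((1:ℝ)/(1-α)) ≤ x₁ := le_trans (le_max_left _ _) (le_max_right _ _)
    have h1α : (0:ℝ) < 1 - α := by linarith
    have h5 : (4:ℝ) ≤ x₁ ^ (1 - α) := by
      calc (4:ℝ) = ((4:ℝ) ^ ((1:ℝ)/(1-α))) ^ (1 - α) := by
            rw [← Real.rpow_mul (by norm_num), one_div, inv_mul_cancel₀ h1α.ne', Real.rpow_one]
        _ ≤ x₁ ^ (1 - α) := by
            apply Real.rpow_le_rpow (Real.rpow_nonneg (by norm_num) _) h4 h1α.le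
    have h6 : x₁ ^ α * x₁ ^ (1 - α) = x₁ := by
      rw [← Real.rpow_add hx0]; ring_nf
      exact Real.rpow_one x₁
    nlinarith [hxa0, h5, h6]
  -- log x ≤ x/4
  have b4 : Real.log x₁ ≤ x₁ / 4 := log_le_quarter h64
  have b5 : 2 * (1 - Real.log α) ≤ x₁ := le_trans (le_max_right _ _) (le_max_right _ _)
  have hlogx0 : 0 ≤ Real.log x₁ := Real.log_nonneg hx1.le
  rw [Lfun]
  nlinarith [b1, b2, b3, b4, b5, hlogx0, mul_nonneg (le_of_lt hα0) hlogx0,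
    mul_le_mul_of_nonneg_left b4 (le_of_lt hα0)]
end C
section D
variable {α : ℝ}

lemma root_package (hα : α ∈ Ioo (0:ℝ) 1) :
    ∃ c : ℝ, 1 < c ∧ Lfun α c = 0 ∧
      (∀ y, 0 < y → (0 ≤ Lfun α y ↔ y ≤ c)) ∧
      (∀ y, 0 < y → (Lfun α y = 0 ↔ y = c)) := by
  obtain ⟨x₁, hx₁, hneg⟩ := exists_L_neg hα
  have hcont : ContinuousOn (Lfun α) (Icc 1 x₁) := fun y hy =>
    ((hasDerivAt_L hα.1 (lt_of_lt_of_le zero_lt_one hy.1)).continuousAt).continuousWithinAt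
  obtain ⟨c, hc, hc0⟩ := intermediate_value_Icc' (le_of_lt hx₁) hcont
    ⟨hneg.le, (L_one_pos hα).le⟩
  have hc1 : 1 < c := by
    rcases eq_or_lt_of_le hc.1 with h | h
    · exfalso; rw [← h] at hc0; exact (L_one_pos hα).ne' hc0
    · exact h
  have hlt : ∀ y, 0 < y → y < c → 0 < Lfun α y := by
    intro y hy hyc
    rcases le_or_gt y 1 with h | h
    · exact L_pos_of_le_one hα hy h
    · have := L_strictAnti hα (mem_Ici.mpr h.le) (mem_Ici.mpr hc1.le) hyc
      rw [hc0] at this; linarith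
  have hgt : ∀ y, c < y → Lfun α y < 0 := by
    intro y hyc
    have := L_strictAnti hα (mem_Ici.mpr hc1.le) (mem_Ici.mpr (hc1.trans hyc).le) hyc
    rw [hc0] at this; linarith
  refine ⟨c, hc1, hc0, ?_, ?_⟩
  · intro y hy
    constructor
    · intro hLy
      by_contra hyc
      push_neg at hyc
      have := hgt y hyc
      linarith
    · intro hyc
      rcases eq_or_lt_of_le hyc with rfl | h
      · exact le_of_eq hc0.symm
      · exact (hlt y hy h).le
  · intro y hy
    constructor
    · intro hLy
      by_contra hyc
      rcases lt_or_gt_of_ne hyc with h | h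
      · have := hlt y hy h; linarith
      · have := hgt y h; linarith
    · rintro rfl; exact hc0

lemma eq_iff_L (hα : α ∈ Ioo (0:ℝ) 1) {x : ℝ} (hx : 0 < x) :
    (x ^ α = Real.log (α * x ^ (α - 1) * Real.exp x * (1 - Real.exp (-x)) + 1)) ↔
      Lfun α x = 0 := by
  have hQform : α * x ^ (α - 1) * Real.exp x * (1 - Real.exp (-x))
      = α * x ^ (α - 1) * (Real.exp x - 1) := by
    rw [Real.exp_neg]
    have h : Real.exp x * (1 - (Real.exp x)⁻¹) = Real.exp x - 1 := by
      field_simp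
    calc α * x ^ (α - 1) * Real.exp x * (1 - (Real.exp x)⁻¹)
        = α * x ^ (α - 1) * (Real.exp x * (1 - (Real.exp x)⁻¹)) := by ring
      _ = α * x ^ (α - 1) * (Real.exp x - 1) := by rw [h]
  rw [hQform]
  have hQ : 0 < α * x ^ (α - 1) * (Real.exp x - 1) := Q_pos hα.1 hx
  have hA := A_pos hα.1 hx
  constructor
  · intro h
    have h2 : Real.exp (x ^ α) = α * x ^ (α - 1) * (Real.exp x - 1) + 1 := by
      rw [h, Real.exp_log (by linarith)]
    rw [L_eq hα.1 hx, h2]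
    norm_num
  · intro h
    rw [L_eq hα.1 hx, sub_eq_zero] at h
    have h2 : Real.exp (x ^ α) - 1 = α * x ^ (α - 1) * (Real.exp x - 1) := by
      rw [← Real.exp_log hA, ← Real.exp_log hQ, h]
    rw [← h2]
    have : Real.exp (x ^ α) - 1 + 1 = Real.exp (x ^ α) := by ring
    rw [this, Real.log_exp]
end D
section F
variable {α : ℝ}

lemma prelec_hasDeriv (hα : α ∈ Ioo (0:ℝ) 1) {p : ℝ} (hp : p ∈ Ioo (0:ℝ) 1) :
    HasDerivAt (prelecConj α)
      (α * (-Real.log (1 - p)) ^ (α - 1) *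
        Real.exp (-((-Real.log (1 - p)) ^ α)) / (1 - p)) p := by
  have h1p : 0 < 1 - p := by linarith [hp.2]
  have hu : 0 < -Real.log (1 - p) := by
    have := Real.log_neg h1p (by linarith [hp.1])
    linarith
  set u := -Real.log (1 - p) with hudef
  have d1 : HasDerivAt (fun q : ℝ => 1 - q) (-1) p := (hasDerivAt_id p).const_sub 1
  have d2 : HasDerivAt (fun q : ℝ => Real.log (1 - q)) (-1 / (1 - p)) p :=
    d1.log h1p.ne'
  have d3 : HasDerivAt (fun q : ℝ => -Real.log (1 - q)) (1 / (1 - p)) p := by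
    have := d2.neg
    exact this.congr_deriv (by ring)
  have d4 : HasDerivAt (fun q : ℝ => (-Real.log (1 - q)) ^ α)
      (1 / (1 - p) * α * u ^ (α - 1)) p := d3.rpow_const (Or.inl hu.ne')
  have d5 : HasDerivAt (fun q : ℝ => Real.exp (-((-Real.log (1 - q)) ^ α)))
      (Real.exp (-(u ^ α)) * -(1 / (1 - p) * α * u ^ (α - 1))) p := d4.neg.exp
  have d6 := d5.const_sub 1
  exact d6.congr_deriv (by ring)

lemma cond_iff (hα : α ∈ Ioo (0:ℝ) 1) {p : ℝ} (hp : p ∈ Ioo (0:ℝ) 1) :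
    (deriv (prelecConj α) p ≤ prelecConj α p / p) ↔
      0 ≤ Lfun α (-Real.log (1 - p)) := by
  have h1p : 0 < 1 - p := by linarith [hp.2]
  have hu : 0 < -Real.log (1 - p) := by
    have := Real.log_neg h1p (by linarith [hp.1])
    linarith
  set x := -Real.log (1 - p) with hxdef
  have hexpnx : Real.exp (-x) = 1 - p := by
    rw [hxdef, neg_neg, Real.exp_log h1p]
  have hexpx : Real.exp x = (1 - p)⁻¹ := by
    rw [← hexpnx, ← Real.exp_neg, neg_neg]
  set E := Real.exp (-(x ^ α)) with hEdef
  have hE0 : 0 < E := Real.exp_pos _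
  have hE1 : E < 1 := by
    rw [hEdef]
    apply Real.exp_lt_one_iff.mpr
    have := Real.rpow_pos_of_pos hu α
    linarith
  have hexpa : Real.exp (x ^ α) = E⁻¹ := by
    rw [hEdef, ← Real.exp_neg, neg_neg]
  have hderiv : deriv (prelecConj α) p = α * x ^ (α - 1) * E / (1 - p) :=
    (prelec_hasDeriv hα hp).deriv
  have hval : prelecConj α p = 1 - E := by
    rw [prelecConj]
  have hx1 : 0 < x ^ (α - 1) := Real.rpow_pos_of_pos hu _
  rw [hderiv, hval, L_nonneg_iff hα.1 hu, hexpx, hexpa]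
  rw [div_le_div_iff₀ h1p hp.1]
  constructor
  · intro h
    have h2 : α * x ^ (α - 1) * ((1 - p)⁻¹ - 1) * ((1 - p) * E)
        ≤ (E⁻¹ - 1) * ((1 - p) * E) := by
      have e1 : α * x ^ (α - 1) * ((1 - p)⁻¹ - 1) * ((1 - p) * E)
          = α * x ^ (α - 1) * E * p := by
        field_simp
        ring
      have e2 : (E⁻¹ - 1) * ((1 - p) * E) = (1 - E) * (1 - p) := by
        field_simp
      rw [e1, e2]
      linarith
    exact le_of_mul_le_mul_right h2 (by positivity)
  · intro h
    have h2 := mul_le_mul_of_nonneg_right h (le_of_lt (show (0:ℝ) < (1 - p) * E by positivity))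
    have e1 : α * x ^ (α - 1) * ((1 - p)⁻¹ - 1) * ((1 - p) * E)
        = α * x ^ (α - 1) * E * p := by
      field_simp
      ring
    have e2 : (E⁻¹ - 1) * ((1 - p) * E) = (1 - E) * (1 - p) := by
      field_simp
    rw [e1, e2] at h2
    linarith
end F

/-- For an inverse S-shaped Prelec weighting function (`α ∈ (0,1)`), the
equation `x^α = ln(α x^{α−1} e^x (1 − e^{−x}) + 1)` has a unique positive solution `x`,
and the tangency point `p*(α) = sup{p ∈ [0,1) : T̃′(p) ≤ T̃(p)/p}` equals `1 − e^{−x}`. -/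
theorem statement12 (α : ℝ) (hα : α ∈ Ioo (0:ℝ) 1) :
    (∃! x : ℝ, 0 < x ∧
        x ^ α = Real.log (α * x ^ (α - 1) * Real.exp x * (1 - Real.exp (-x)) + 1))
    ∧
    (∀ x : ℝ, 0 < x →
        x ^ α = Real.log (α * x ^ (α - 1) * Real.exp x * (1 - Real.exp (-x)) + 1) →
        sSup {p : ℝ | p ∈ Ico (0:ℝ) 1 ∧
            deriv (prelecConj α) p ≤ prelecConj α p / p}
          = 1 - Real.exp (-x)) := by
  obtain ⟨c, hc1, hc0, hle, heq⟩ := root_package hα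
  have hcpos : (0:ℝ) < c := by linarith
  constructor
  · refine ⟨c, ⟨hcpos, (eq_iff_L hα hcpos).mpr hc0⟩, ?_⟩
    rintro y ⟨hy0, hyeq⟩
    exact (heq y hy0).mp ((eq_iff_L hα hy0).mp hyeq)
  · intro x hx hxeq
    have hxc : x = c := (heq x hx).mp ((eq_iff_L hα hx).mp hxeq)
    subst hxc
    have hec1 : Real.exp (-x) < 1 := Real.exp_lt_one_iff.mpr (by linarith)
    have hec0 : (0:ℝ) < Real.exp (-x) := Real.exp_pos _
    have hpsIoo : (1 - Real.exp (-x)) ∈ Ioo (0:ℝ) 1 := ⟨by linarith, by linarith⟩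
    have hlogps : -Real.log (1 - (1 - Real.exp (-x))) = x := by
      rw [show (1 - (1 - Real.exp (-x))) = Real.exp (-x) by ring, Real.log_exp]
      ring
    have hmem : (1 - Real.exp (-x)) ∈ {p : ℝ | p ∈ Ico (0:ℝ) 1 ∧
        deriv (prelecConj α) p ≤ prelecConj α p / p} := by
      refine ⟨⟨by linarith, by linarith⟩, ?_⟩
      refine (cond_iff hα hpsIoo).mpr ?_
      rw [hlogps, hc0]
    have hub : ∀ p ∈ {p : ℝ | p ∈ Ico (0:ℝ) 1 ∧
        deriv (prelecConj α) p ≤ prelecConj α p / p}, p ≤ 1 - Real.exp (-x) := by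
      rintro p ⟨⟨hp0, hp1⟩, hcond⟩
      rcases eq_or_lt_of_le hp0 with h | hp0'
      · rw [← h]; linarith
      · have hpIoo : p ∈ Ioo (0:ℝ) 1 := ⟨hp0', hp1⟩
        have h1p : (0:ℝ) < 1 - p := by linarith
        have hxp : 0 < -Real.log (1 - p) := by
          have := Real.log_neg h1p (by linarith)
          linarith
        have hL := (cond_iff hα hpIoo).mp hcond
        have hxpc : -Real.log (1 - p) ≤ x := (hle _ hxp).mp hL
        have h2 : Real.exp (-x) ≤ Real.exp (Real.log (1 - p)) :=
          Real.exp_le_exp.mpr (by linarith)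
        rw [Real.exp_log h1p] at h2
        linarith
    exact le_antisymm (csSup_le ⟨_, hmem⟩ hub) (le_csSup ⟨_, hub⟩ hmem)

end
end

section
/- Let T̃ : [0,1] → [0,1] be continuously differentiable and increasing with T̃(0) = 0 and T̃(1) = 1, let δ be its convex envelope on [0,1], assumed differentiable on (0,1), let u : ℝ → ℝ be nondecreasing, and let f : (0,1) → ℝ be a nondecreasing, left-continuous bounded function. Then ∫₀¹ u(f(t))·T̃′(t) dt ≤ ∫₀¹ u(f(t))·δ′(t) dt. -/
open MeasureTheory Set

noncomputable section

variable {Ω : Type*} [MeasurableSpace Ω]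

/-- The cumulative distribution function `F_X(x) = P(X ≤ x)` of a random variable. -/
def cdfR (P : Measure Ω) (X : Ω → ℝ) (x : ℝ) : ℝ := (P {ω | X ω ≤ x}).toReal

/-- The left-continuous quantile function `F_X⁻¹(t) = inf {x | F_X(x) ≥ t}`. -/
def quantR (P : Measure Ω) (X : Ω → ℝ) (t : ℝ) : ℝ := sInf {x : ℝ | t ≤ cdfR P X x}

/-- A bounded (measurable) random variable. -/
def IsBddRV (X : Ω → ℝ) : Prop := Measurable X ∧ ∃ C : ℝ, ∀ ω, |X ω| ≤ C

/-- Comonotonicity of two random variables. -/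
def ComonRV (Y Z : Ω → ℝ) : Prop := ∀ ω ω' : Ω, 0 ≤ (Y ω - Y ω') * (Z ω - Z ω')

/-- `U` is uniformly distributed on `(0,1)` under `P`. -/
def UnifOn01 (P : Measure Ω) (U : Ω → ℝ) : Prop :=
  Measurable U ∧ ∀ t ∈ Icc (0:ℝ) 1, cdfR P U t = t

/-- A nonatomic measure. -/
def NonatomicM (P : Measure Ω) : Prop :=
  ∀ s : Set Ω, MeasurableSet s → P s ≠ 0 →
    ∃ t : Set Ω, MeasurableSet t ∧ t ⊆ s ∧ 0 < P t ∧ P t < P s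

/-- Expected utility. -/
def EUf (P : Measure Ω) (u : ℝ → ℝ) (X : Ω → ℝ) : ℝ := ∫ ω, u (X ω) ∂P

/-- The conjugate `T̃(t) = 1 - T(1-t)` of a probability weighting function. -/
def conjW (T : ℝ → ℝ) : ℝ → ℝ := fun t => 1 - T (1 - t)

/-- Rank-dependent utility `∫₀¹ u(F_X⁻¹(t)) Tc′(t) dt`, where `Tc` is the conjugate
probability weighting function. -/
def RDUf (P : Measure Ω) (u : ℝ → ℝ) (Tc : ℝ → ℝ) (X : Ω → ℝ) : ℝ :=
  ∫ t in Ioo (0:ℝ) 1, u (quantR P X t) * deriv Tc t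

/-- A probability weighting function: maps `[0,1]` to `[0,1]`, twice differentiable,
strictly increasing, `T(0) = 0`, `T(1) = 1`. -/
def IsPWF (T : ℝ → ℝ) : Prop :=
  (∀ t ∈ Icc (0:ℝ) 1, T t ∈ Icc (0:ℝ) 1) ∧ StrictMonoOn T (Icc (0:ℝ) 1) ∧
    (∀ t ∈ Icc (0:ℝ) 1, DifferentiableAt ℝ T t) ∧
    (∀ t ∈ Icc (0:ℝ) 1, DifferentiableAt ℝ (deriv T) t) ∧ T 0 = 0 ∧ T 1 = 1

/-- A utility function: twice differentiable, strictly concave, strictly increasing. -/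
def IsUtility (u : ℝ → ℝ) : Prop :=
  (∀ x, DifferentiableAt ℝ u x) ∧ (∀ x, DifferentiableAt ℝ (deriv u) x) ∧
    StrictConcaveOn ℝ univ u ∧ StrictMono u

/-- `d` is the convex envelope of `g` on `[0,1]`: the greatest convex function
below `g` on `[0,1]`. -/
def IsConvexEnvelope (g d : ℝ → ℝ) : Prop :=
  ConvexOn ℝ (Icc (0:ℝ) 1) d ∧ (∀ t ∈ Icc (0:ℝ) 1, d t ≤ g t) ∧
    ∀ h : ℝ → ℝ, ConvexOn ℝ (Icc (0:ℝ) 1) h → (∀ t ∈ Icc (0:ℝ) 1, h t ≤ g t) →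
      ∀ t ∈ Icc (0:ℝ) 1, h t ≤ d t

/-- Feasible allocations: bounded random variables summing a.s. to the constant `w`. -/
def AllocC (P : Measure Ω) {m : ℕ} (w : ℝ) (X : Fin m → Ω → ℝ) : Prop :=
  (∀ i, IsBddRV (X i)) ∧ ∀ᵐ ω ∂P, (∑ i, X i ω) = w

/-- A quantile function: a nondecreasing left-continuous function on `(0,1)`. -/
def IsQuantFun (f : ℝ → ℝ) : Prop :=
  MonotoneOn f (Ioo (0:ℝ) 1) ∧ ∀ t ∈ Ioo (0:ℝ) 1, ContinuousWithinAt f (Iic t) t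

/-- `I_i := (u_i′)⁻¹`, the inverse marginal utility. -/
def invMarg (u : ℝ → ℝ) : ℝ → ℝ := Function.invFun (deriv u)

end

noncomputable section

open MeasureTheory Set

/-- If `δ` is the convex envelope of `T̃` on `[0,1]`, `u` is nondecreasing,
and `f` is a nondecreasing, left-continuous bounded function on `(0,1)`, then
`∫₀¹ u(f(t)) T̃′(t) dt ≤ ∫₀¹ u(f(t)) δ′(t) dt`. -/
theorem statement19
    (g : ℝ → ℝ)
    (hmap : ∀ t ∈ Icc (0:ℝ) 1, g t ∈ Icc (0:ℝ) 1)
    (hg : ContDiffOn ℝ 1 g (Icc (0:ℝ) 1))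
    (hmono : MonotoneOn g (Icc (0:ℝ) 1))
    (h0 : g 0 = 0) (h1 : g 1 = 1)
    (δ : ℝ → ℝ) (hδ : IsConvexEnvelope g δ)
    (hδdiff : ∀ t ∈ Ioo (0:ℝ) 1, DifferentiableAt ℝ δ t)
    (u : ℝ → ℝ) (hu : Monotone u)
    (f : ℝ → ℝ) (hf : MonotoneOn f (Ioo (0:ℝ) 1))
    (hflc : ∀ t ∈ Ioo (0:ℝ) 1, ContinuousWithinAt f (Iic t) t)
    (hfbdd : ∃ C : ℝ, ∀ t ∈ Ioo (0:ℝ) 1, |f t| ≤ C) :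
    (∫ t in Ioo (0:ℝ) 1, u (f t) * deriv g t)
      ≤ ∫ t in Ioo (0:ℝ) 1, u (f t) * deriv δ t := by
  classical
  obtain ⟨C, hC⟩ := hfbdd
  have hC0 : 0 ≤ C := le_trans (abs_nonneg _) (hC (1/2) (by norm_num))
  set a : ℝ := u (-C) with hadef
  set b : ℝ := u C with hbdef
  have hab : a ≤ b := hu (by linarith)
  have hφbd : ∀ t ∈ Ioo (0:ℝ) 1, a ≤ u (f t) ∧ u (f t) ≤ b := by
    intro t ht
    have := abs_le.1 (hC t ht)
    exact ⟨hu this.1, hu this.2⟩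
  have hconv : ConvexOn ℝ (Icc (0:ℝ) 1) δ := hδ.1
  have hgc : ContinuousOn g (Icc (0:ℝ) 1) := hg.continuousOn
  have hgd : DifferentiableOn ℝ g (Icc (0:ℝ) 1) := hg.differentiableOn one_ne_zero
  have hdc : ContinuousOn (derivWithin g (Icc (0:ℝ) 1)) (Icc (0:ℝ) 1) :=
    hg.continuousOn_derivWithin (uniqueDiffOn_Icc one_pos) le_rfl
  obtain ⟨M0, hM0⟩ := isCompact_Icc.exists_bound_of_continuousOn hdc
  set M : ℝ := max M0 0 with hMdef
  have hM : ∀ t ∈ Icc (0:ℝ) 1, ‖derivWithin g (Icc (0:ℝ) 1) t‖ ≤ M :=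
    fun t ht => (hM0 t ht).trans (le_max_left _ _)
  have hMnn : 0 ≤ M := le_max_right _ _
  have hderivg : ∀ t ∈ Ioo (0:ℝ) 1, DifferentiableAt ℝ g t := fun t ht =>
    (hgd t (Ioo_subset_Icc_self ht)).differentiableAt (Icc_mem_nhds ht.1 ht.2)
  have hgM : ∀ t ∈ Ioo (0:ℝ) 1, |deriv g t| ≤ M := by
    intro t ht
    have h1' : derivWithin g (Icc (0:ℝ) 1) t = deriv g t :=
      derivWithin_of_mem_nhds (Icc_mem_nhds ht.1 ht.2)
    have := hM t (Ioo_subset_Icc_self ht)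
    rwa [h1', Real.norm_eq_abs] at this
  -- Lipschitz-type bound: `1 - M*(1-t) ≤ g t`
  have hlip : ∀ t ∈ Icc (0:ℝ) 1, 1 - M * (1 - t) ≤ g t := by
    intro t ht
    have h2' := Convex.norm_image_sub_le_of_norm_derivWithin_le hgd hM (convex_Icc 0 1)
      ht (right_mem_Icc.2 zero_le_one)
    rw [Real.norm_eq_abs, Real.norm_eq_abs] at h2'
    have h3' : |1 - t| = 1 - t := abs_of_nonneg (by linarith [ht.2])
    rw [h3', h1] at h2'
    have := (abs_le.1 h2').2
    linarith
  set ℓ : ℝ → ℝ := fun t => 1 - M * (1 - t) with hℓdef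
  have hℓconv : ConvexOn ℝ (Icc (0:ℝ) 1) ℓ := by
    refine ⟨convex_Icc 0 1, fun x _ y _ p q hp hq hpq => ?_⟩
    have hq' : q = 1 - p := by linarith
    subst hq'
    simp only [hℓdef, smul_eq_mul]
    apply le_of_eq; ring
  have hδℓ : ∀ t ∈ Icc (0:ℝ) 1, ℓ t ≤ δ t := hδ.2.2 ℓ hℓconv hlip
  have hδ0 : ∀ t ∈ Icc (0:ℝ) 1, 0 ≤ δ t :=
    hδ.2.2 (fun _ => 0) (convexOn_const 0 (convex_Icc 0 1)) (fun t ht => (hmap t ht).1)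
  have hδle : ∀ t ∈ Icc (0:ℝ) 1, δ t ≤ g t := hδ.2.1
  have hδ1 : δ 1 = 1 := by
    have h1' := hδle 1 (right_mem_Icc.2 zero_le_one)
    have h2' := hδℓ 1 (right_mem_Icc.2 zero_le_one)
    simp only [hℓdef] at h2'
    rw [h1] at h1'
    norm_num at h2'
    linarith
  have hδz : δ 0 = 0 := by
    have h1' := hδle 0 (left_mem_Icc.2 zero_le_one)
    have h2' := hδ0 0 (left_mem_Icc.2 zero_le_one)
    rw [h0] at h1'
    linarith
  -- continuity of δ on [0,1]
  have hδcont : ContinuousOn δ (Icc (0:ℝ) 1) := by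
    intro t ht
    rcases eq_or_lt_of_le ht.1 with h0t | h0t
    · -- t = 0 : squeeze between 0 and g
      subst h0t
      have hg0 : Filter.Tendsto g (nhdsWithin 0 (Icc (0:ℝ) 1)) (nhds (0:ℝ)) := by
        have := hgc 0 (left_mem_Icc.2 zero_le_one)
        rwa [ContinuousWithinAt, h0] at this
      have h00 : Filter.Tendsto (fun _ : ℝ => (0:ℝ)) (nhdsWithin 0 (Icc (0:ℝ) 1))
          (nhds (0:ℝ)) := tendsto_const_nhds
      have : Filter.Tendsto δ (nhdsWithin 0 (Icc (0:ℝ) 1)) (nhds (0:ℝ)) := by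
        refine tendsto_of_tendsto_of_tendsto_of_le_of_le' h00 hg0 ?_ ?_
        · exact Filter.eventually_of_mem self_mem_nhdsWithin fun s hs => hδ0 s hs
        · exact Filter.eventually_of_mem self_mem_nhdsWithin fun s hs => hδle s hs
      rwa [ContinuousWithinAt, hδz]
    rcases eq_or_lt_of_le ht.2 with h1t | h1t
    · -- t = 1 : squeeze between ℓ and g
      subst h1t
      have hg1 : Filter.Tendsto g (nhdsWithin 1 (Icc (0:ℝ) 1)) (nhds (1:ℝ)) := by
        have := hgc 1 (right_mem_Icc.2 zero_le_one)
        rwa [ContinuousWithinAt, h1] at this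
      have hℓ1 : Filter.Tendsto ℓ (nhdsWithin 1 (Icc (0:ℝ) 1)) (nhds (1:ℝ)) := by
        have hc : Continuous ℓ := by
          simp only [hℓdef]; fun_prop
        have := (hc.tendsto 1).mono_left (nhdsWithin_le_nhds (s := Icc (0:ℝ) 1))
        simpa [hℓdef] using this
      have : Filter.Tendsto δ (nhdsWithin 1 (Icc (0:ℝ) 1)) (nhds (1:ℝ)) := by
        refine tendsto_of_tendsto_of_tendsto_of_le_of_le' hℓ1 hg1 ?_ ?_
        · exact Filter.eventually_of_mem self_mem_nhdsWithin fun s hs => hδℓ s hs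
        · exact Filter.eventually_of_mem self_mem_nhdsWithin fun s hs => hδle s hs
      rwa [ContinuousWithinAt, hδ1]
    · exact ((hδdiff t ⟨h0t, h1t⟩).continuousAt).continuousWithinAt
  -- bounds on deriv δ on (0,1)
  have hδM : ∀ t ∈ Ioo (0:ℝ) 1, 0 ≤ deriv δ t ∧ deriv δ t ≤ M := by
    intro t ht
    constructor
    · have hs := hconv.slope_le_deriv (left_mem_Icc.2 zero_le_one)
        (Ioo_subset_Icc_self ht) ht.1 (hδdiff t ht)
      have hsl : slope δ 0 t = (δ t - δ 0) / (t - 0) := by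
        rw [slope_def_field]
      rw [hsl, hδz] at hs
      have : 0 ≤ (δ t - 0) / (t - 0) := by
        apply div_nonneg
        · have := hδ0 t (Ioo_subset_Icc_self ht); linarith
        · linarith [ht.1]
      linarith
    · have hs := hconv.deriv_le_slope (Ioo_subset_Icc_self ht)
        (right_mem_Icc.2 zero_le_one) ht.2 (hδdiff t ht)
      have hsl : slope δ t 1 = (δ 1 - δ t) / (1 - t) := by
        rw [slope_def_field]
      rw [hsl, hδ1] at hs
      have hℓt := hδℓ t (Ioo_subset_Icc_self ht)
      simp only [hℓdef] at hℓt
      have h1t : (0:ℝ) < 1 - t := by linarith [ht.2]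
      have : (1 - δ t) / (1 - t) ≤ M := by
        rw [div_le_iff₀ h1t]
        nlinarith
      linarith
  set k : ℝ → ℝ := fun t => deriv g t - deriv δ t with hkdef
  have hkmeas : Measurable k := (measurable_deriv g).sub (measurable_deriv δ)
  have hkbd : ∀ t ∈ Ioo (0:ℝ) 1, |k t| ≤ 2 * M := by
    intro t ht
    have h1' := hgM t ht
    have h2' := hδM t ht
    have h3' := abs_le.1 h1'
    simp only [hkdef]
    rw [abs_le]
    constructor <;> linarith [h2'.1, h2'.2, h3'.1, h3'.2]
  -- k is integrable on subintervals, with the FTC identity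
  have hkint : ∀ s ∈ Ico (0:ℝ) 1, IntegrableOn k (Ioo s 1) := by
    intro s hs
    refine Integrable.mono' (integrable_const (2 * M))
      (hkmeas.aestronglyMeasurable.restrict) ?_
    filter_upwards [ae_restrict_mem measurableSet_Ioo] with t ht
    rw [Real.norm_eq_abs]
    exact hkbd t ⟨lt_of_le_of_lt hs.1 ht.1, ht.2⟩
  have FTC : ∀ s ∈ Ico (0:ℝ) 1, ∫ t in Ioo s 1, k t = -(g s - δ s) := by
    intro s hs
    have hsub : Icc s 1 ⊆ Icc (0:ℝ) 1 := Icc_subset_Icc hs.1 le_rfl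
    have hcont : ContinuousOn (fun t => g t - δ t) (Icc s 1) :=
      (hgc.mono hsub).sub (hδcont.mono hsub)
    have hder : ∀ x ∈ Ioo s 1, HasDerivWithinAt (fun t => g t - δ t) (k x) (Ioi x) x := by
      intro x hx
      have hx' : x ∈ Ioo (0:ℝ) 1 := ⟨lt_of_le_of_lt hs.1 hx.1, hx.2⟩
      exact (((hderivg x hx').hasDerivAt.sub (hδdiff x hx').hasDerivAt)).hasDerivWithinAt
    have hint : IntervalIntegrable k volume s 1 := by
      rw [intervalIntegrable_iff_integrableOn_Ioo_of_le hs.2.le]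
      exact hkint s hs
    have := intervalIntegral.integral_eq_sub_of_hasDeriv_right_of_le hs.2.le hcont hder hint
    rw [intervalIntegral.integral_of_le hs.2.le, integral_Ioc_eq_integral_Ioo] at this
    rw [this, h1, hδ1]
    ring
  have hk01 : IntegrableOn k (Ioo (0:ℝ) 1) := hkint 0 ⟨le_rfl, one_pos⟩
  have hFTC0 : ∫ t in Ioo (0:ℝ) 1, k t = 0 := by
    rw [FTC 0 ⟨le_rfl, one_pos⟩, h0, hδz]
    ring
  -- measurability of t ↦ u (f t)
  have hfm : AEMeasurable f (volume.restrict (Ioo (0:ℝ) 1)) :=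
    aemeasurable_restrict_of_monotoneOn measurableSet_Ioo hf
  have hum : Measurable u := hu.measurable
  have hφm : AEMeasurable (fun t => u (f t)) (volume.restrict (Ioo (0:ℝ) 1)) :=
    hum.comp_aemeasurable hfm
  set ψ : ℝ → ℝ := hφm.mk _ with hψdef
  have hψmeas : Measurable ψ := hφm.measurable_mk
  have hψeq : (fun t => u (f t)) =ᵐ[volume.restrict (Ioo (0:ℝ) 1)] ψ := hφm.ae_eq_mk
  -- the key inequality : ∫ u(f t) * k t ≤ 0
  have hkey : ∫ t in Ioo (0:ℝ) 1, u (f t) * k t ≤ 0 := by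
    -- split off the constant a
    have hsplit : ∀ t, u (f t) * k t = a * k t + (u (f t) - a) * k t := by
      intro t; ring
    have hint1 : IntegrableOn (fun t => a * k t) (Ioo (0:ℝ) 1) := hk01.const_mul a
    have hint2 : IntegrableOn (fun t => (u (f t) - a) * k t) (Ioo (0:ℝ) 1) := by
      refine Integrable.mono' (integrable_const ((b - a) * (2 * M)))
        (((hφm.sub aemeasurable_const).mul hkmeas.aemeasurable).aestronglyMeasurable) ?_
      filter_upwards [ae_restrict_mem measurableSet_Ioo] with t ht
      rw [Real.norm_eq_abs, abs_mul]
      apply mul_le_mul _ (hkbd t ht) (abs_nonneg _) (by linarith)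
      rw [abs_le]
      have := hφbd t ht
      constructor <;> linarith
    rw [show (fun t => u (f t) * k t) = fun t => a * k t + (u (f t) - a) * k t from
      funext hsplit]
    rw [integral_add hint1 hint2]
    have e1 : ∫ t in Ioo (0:ℝ) 1, a * k t = 0 := by
      rw [integral_const_mul, hFTC0, mul_zero]
    rw [e1, zero_add]
    -- layer-cake representation
    have hlayer : ∀ t ∈ Ioo (0:ℝ) 1,
        (u (f t) - a) * k t = ∫ c in Ioo a b, (if c < u (f t) then k t else 0) := by
      intro t ht
      have hbd := hφbd t ht
      have e2 : (fun c => if c < u (f t) then k t else 0)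
          = (Iio (u (f t))).indicator (fun _ => k t) := by
        funext c
        simp [indicator, mem_Iio]
      rw [e2, setIntegral_indicator measurableSet_Iio, Ioo_inter_Iio,
        min_eq_right hbd.2, setIntegral_const]
      rw [Real.volume_real_Ioo_of_le hbd.1, smul_eq_mul]
    rw [setIntegral_congr_fun measurableSet_Ioo hlayer]
    -- pass to the measurable representative ψ
    have hswitch : ∫ t in Ioo (0:ℝ) 1, (∫ c in Ioo a b, if c < u (f t) then k t else 0)
        = ∫ t in Ioo (0:ℝ) 1, (∫ c in Ioo a b, if c < ψ t then k t else 0) := by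
      refine integral_congr_ae ?_
      filter_upwards [hψeq] with t ht
      rw [ht]
    rw [hswitch]
    -- Fubini
    have hFmeas : Measurable (Function.uncurry fun t c => if c < ψ t then k t else 0) := by
      have : Measurable fun p : ℝ × ℝ => if p.2 < ψ p.1 then k p.1 else 0 :=
        Measurable.ite (measurableSet_lt measurable_snd (hψmeas.comp measurable_fst))
          (hkmeas.comp measurable_fst) measurable_const
      exact this
    have hFint : Integrable (Function.uncurry fun t c => if c < ψ t then k t else 0)
        ((volume.restrict (Ioo (0:ℝ) 1)).prod (volume.restrict (Ioo a b))) := by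
      refine Integrable.mono' (integrable_const (2 * M)) hFmeas.aestronglyMeasurable ?_
      rw [Measure.prod_restrict]
      filter_upwards [ae_restrict_mem (measurableSet_Ioo.prod measurableSet_Ioo)] with p hp
      have hp1 : p.1 ∈ Ioo (0:ℝ) 1 := hp.1
      rw [Function.uncurry]
      rw [Real.norm_eq_abs]
      by_cases hc : p.2 < ψ p.1
      · rw [if_pos hc]; exact hkbd p.1 hp1
      · rw [if_neg hc]; simpa using by positivity
    rw [integral_integral_swap hFint]
    -- each inner integral is nonpositive
    apply integral_nonpos
    intro c
    -- switch back from ψ to u ∘ f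
    have hback : ∫ t in Ioo (0:ℝ) 1, (if c < ψ t then k t else 0)
        = ∫ t in Ioo (0:ℝ) 1, (if c < u (f t) then k t else 0) := by
      refine integral_congr_ae ?_
      filter_upwards [hψeq] with t ht
      rw [ht]
    show (∫ t in Ioo (0:ℝ) 1, (if c < ψ t then k t else 0)) ≤ 0
    rw [hback]
    by_cases hS : ∃ t ∈ Ioo (0:ℝ) 1, c < u (f t)
    · obtain ⟨t0, ht0, hct0⟩ := hS
      set S : Set ℝ := {t | t ∈ Ioo (0:ℝ) 1 ∧ c < u (f t)} with hSdef
      have hSne : S.Nonempty := ⟨t0, ht0, hct0⟩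
      have hSbdd : BddBelow S := ⟨0, fun t ht => ht.1.1.le⟩
      set s : ℝ := sInf S with hsdef
      have hs0 : 0 ≤ s := le_csInf hSne fun t ht => ht.1.1.le
      have hs1 : s < 1 := lt_of_le_of_lt (csInf_le hSbdd ⟨ht0, hct0⟩) ht0.2
      have hup : ∀ t ∈ Ioo (0:ℝ) 1, s < t → c < u (f t) := by
        intro t ht hst
        obtain ⟨t', ht'S, ht't⟩ := exists_lt_of_csInf_lt hSne hst
        calc c < u (f t') := ht'S.2
          _ ≤ u (f t) := hu (hf ht'S.1 ht ht't.le)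
      have hdown : ∀ t ∈ Ioo (0:ℝ) 1, t < s → ¬ c < u (f t) := by
        intro t ht hts hc
        exact absurd (csInf_le hSbdd ⟨ht, hc⟩) (not_le.2 hts)
      have hne : ∀ᵐ t ∂(volume.restrict (Ioo (0:ℝ) 1)), t ≠ s := by
        refine ae_restrict_of_ae ?_
        rw [ae_iff]
        simpa using measure_singleton s
      have hcongr : ∫ t in Ioo (0:ℝ) 1, (if c < u (f t) then k t else 0)
          = ∫ t in Ioo (0:ℝ) 1, (Ioi s).indicator k t := by
        refine integral_congr_ae ?_
        filter_upwards [ae_restrict_mem measurableSet_Ioo, hne] with t ht hts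
        rcases lt_or_gt_of_ne hts with hlt | hgt
        · rw [if_neg (hdown t ht hlt), indicator_of_notMem (by simpa using hlt.le.not_gt)]
        · rw [if_pos (hup t ht hgt), indicator_of_mem (mem_Ioi.2 hgt)]
      rw [hcongr, setIntegral_indicator measurableSet_Ioi]
      have hset : Ioo (0:ℝ) 1 ∩ Ioi s = Ioo s 1 := by
        ext t
        simp only [mem_inter_iff, mem_Ioo, mem_Ioi]
        constructor
        · rintro ⟨⟨_, ht1⟩, hts⟩; exact ⟨hts, ht1⟩
        · rintro ⟨hts, ht1⟩; exact ⟨⟨lt_of_le_of_lt hs0 hts, ht1⟩, hts⟩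
      rw [hset, FTC s ⟨hs0, hs1⟩]
      have := hδle s ⟨hs0, hs1.le⟩
      linarith
    · push_neg at hS
      have : ∀ t ∈ Ioo (0:ℝ) 1, (if c < u (f t) then k t else 0) = 0 := by
        intro t ht
        rw [if_neg (not_lt.2 (hS t ht))]
      rw [setIntegral_congr_fun measurableSet_Ioo this, integral_zero]
  -- conclude
  have hintg : IntegrableOn (fun t => u (f t) * deriv g t) (Ioo (0:ℝ) 1) := by
    refine Integrable.mono' (integrable_const ((|a| + |b|) * M))
      ((hφm.mul (measurable_deriv g).aemeasurable).aestronglyMeasurable) ?_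
    filter_upwards [ae_restrict_mem measurableSet_Ioo] with t ht
    rw [Real.norm_eq_abs, abs_mul]
    have hb1 := hφbd t ht
    have : |u (f t)| ≤ |a| + |b| := by
      rw [abs_le]
      constructor
      · have := neg_abs_le a; linarith [abs_nonneg b]
      · have := le_abs_self b; linarith [abs_nonneg a]
    exact mul_le_mul this (hgM t ht) (abs_nonneg _) (by positivity)
  have hintd : IntegrableOn (fun t => u (f t) * deriv δ t) (Ioo (0:ℝ) 1) := by
    refine Integrable.mono' (integrable_const ((|a| + |b|) * M))
      ((hφm.mul (measurable_deriv δ).aemeasurable).aestronglyMeasurable) ?_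
    filter_upwards [ae_restrict_mem measurableSet_Ioo] with t ht
    rw [Real.norm_eq_abs, abs_mul]
    have hb1 := hφbd t ht
    have h2' := hδM t ht
    have hδabs : |deriv δ t| ≤ M := by rw [abs_le]; constructor <;> linarith
    have : |u (f t)| ≤ |a| + |b| := by
      rw [abs_le]
      constructor
      · have := neg_abs_le a; linarith [abs_nonneg b]
      · have := le_abs_self b; linarith [abs_nonneg a]
    exact mul_le_mul this hδabs (abs_nonneg _) (by positivity)
  have hsub : (∫ t in Ioo (0:ℝ) 1, u (f t) * deriv g t)
      - (∫ t in Ioo (0:ℝ) 1, u (f t) * deriv δ t)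
      = ∫ t in Ioo (0:ℝ) 1, u (f t) * k t := by
    rw [← integral_sub hintg hintd]
    congr 1
    funext t
    simp only [hkdef]
    ring
  linarith [hsub ▸ hkey]
end
end
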